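/- There exist 4×4 Markov matrices M and N, both with K3 form and both embeddable (i.e. M = exp(Q₁) and N = exp(Q₂) for some rate matrices Q₁, Q₂), such that the product M·N is not embeddable: there is no rate matrix Q with exp(Q) = M·N. In particular, the set of embeddable matrices within the Kimura 3ST model is not multiplicatively closed. -/

import Mathlib

open NormedSpace Matrix

attribute [local instance] Matrix.linftyOpNormedAddCommGroup Matrix.linftyOpNormedRing
  Matrix.linftyOpNormedAlgebra

/-! ### Auxiliary algebra homomorphisms -/

noncomputable def phiMfun (p : ℝ × ℝ × ℂ) : Matrix (Fin 4) (Fin 4) ℝ :=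
  !![(p.1+p.2.1)/4 + p.2.2.re/2, (p.1+p.2.1)/4 - p.2.2.re/2, (p.1-p.2.1)/4 + p.2.2.im/2, (p.1-p.2.1)/4 - p.2.2.im/2;
     (p.1+p.2.1)/4 - p.2.2.re/2, (p.1+p.2.1)/4 + p.2.2.re/2, (p.1-p.2.1)/4 - p.2.2.im/2, (p.1-p.2.1)/4 + p.2.2.im/2;
     (p.1-p.2.1)/4 - p.2.2.im/2, (p.1-p.2.1)/4 + p.2.2.im/2, (p.1+p.2.1)/4 + p.2.2.re/2, (p.1+p.2.1)/4 - p.2.2.re/2;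
     (p.1-p.2.1)/4 + p.2.2.im/2, (p.1-p.2.1)/4 - p.2.2.im/2, (p.1+p.2.1)/4 - p.2.2.re/2, (p.1+p.2.1)/4 + p.2.2.re/2]

noncomputable def phiKfun (p : ℝ × ℝ × ℝ × ℝ) : Matrix (Fin 4) (Fin 4) ℝ :=
  !![(p.1+p.2.1+p.2.2.1+p.2.2.2)/4, (p.1+p.2.1-p.2.2.1-p.2.2.2)/4, (p.1-p.2.1+p.2.2.1-p.2.2.2)/4, (p.1-p.2.1-p.2.2.1+p.2.2.2)/4;
     (p.1+p.2.1-p.2.2.1-p.2.2.2)/4, (p.1+p.2.1+p.2.2.1+p.2.2.2)/4, (p.1-p.2.1-p.2.2.1+p.2.2.2)/4, (p.1-p.2.1+p.2.2.1-p.2.2.2)/4;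
     (p.1-p.2.1+p.2.2.1-p.2.2.2)/4, (p.1-p.2.1-p.2.2.1+p.2.2.2)/4, (p.1+p.2.1+p.2.2.1+p.2.2.2)/4, (p.1+p.2.1-p.2.2.1-p.2.2.2)/4;
     (p.1-p.2.1-p.2.2.1+p.2.2.2)/4, (p.1-p.2.1+p.2.2.1-p.2.2.2)/4, (p.1+p.2.1-p.2.2.1-p.2.2.2)/4, (p.1+p.2.1+p.2.2.1+p.2.2.2)/4]

lemma phiMfun_one : phiMfun 1 = 1 := by
  ext i j
  fin_cases i <;> fin_cases j <;>
    simp [phiMfun, Matrix.one_apply, Matrix.vecHead, Matrix.vecTail] <;> norm_num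

lemma phiMfun_mul (p q : ℝ × ℝ × ℂ) : phiMfun (p * q) = phiMfun p * phiMfun q := by
  ext i j
  fin_cases i <;> fin_cases j <;>
    simp [phiMfun, Matrix.mul_apply, Fin.sum_univ_four, Complex.mul_re, Complex.mul_im] <;> ring

lemma phiMfun_zero : phiMfun 0 = 0 := by
  ext i j
  fin_cases i <;> fin_cases j <;>
    simp [phiMfun, Matrix.vecHead, Matrix.vecTail]

lemma phiMfun_add (p q : ℝ × ℝ × ℂ) : phiMfun (p + q) = phiMfun p + phiMfun q := by
  ext i j
  fin_cases i <;> fin_cases j <;>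
    simp [phiMfun, Matrix.vecHead, Matrix.vecTail] <;> ring

lemma phiMfun_algebraMap (r : ℝ) :
    phiMfun (algebraMap ℝ (ℝ × ℝ × ℂ) r) = algebraMap ℝ (Matrix (Fin 4) (Fin 4) ℝ) r := by
  ext i j
  fin_cases i <;> fin_cases j <;>
    simp [phiMfun, Matrix.algebraMap_matrix_apply, Matrix.one_apply, Matrix.vecHead,
      Matrix.vecTail] <;> ring

noncomputable def phiM : (ℝ × ℝ × ℂ) →ₐ[ℝ] Matrix (Fin 4) (Fin 4) ℝ where
  toFun := phiMfun
  map_one' := phiMfun_one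
  map_mul' := phiMfun_mul
  map_zero' := phiMfun_zero
  map_add' := phiMfun_add
  commutes' := phiMfun_algebraMap

lemma phiKfun_one : phiKfun 1 = 1 := by
  ext i j
  fin_cases i <;> fin_cases j <;>
    simp [phiKfun, Matrix.one_apply, Matrix.vecHead, Matrix.vecTail] <;> norm_num

lemma phiKfun_mul (p q : ℝ × ℝ × ℝ × ℝ) : phiKfun (p * q) = phiKfun p * phiKfun q := by
  ext i j
  fin_cases i <;> fin_cases j <;>
    simp [phiKfun, Matrix.mul_apply, Fin.sum_univ_four] <;> ring

lemma phiKfun_zero : phiKfun 0 = 0 := by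
  ext i j
  fin_cases i <;> fin_cases j <;>
    simp [phiKfun, Matrix.vecHead, Matrix.vecTail]

lemma phiKfun_add (p q : ℝ × ℝ × ℝ × ℝ) : phiKfun (p + q) = phiKfun p + phiKfun q := by
  ext i j
  fin_cases i <;> fin_cases j <;>
    simp [phiKfun, Matrix.vecHead, Matrix.vecTail] <;> ring

lemma phiKfun_algebraMap (r : ℝ) :
    phiKfun (algebraMap ℝ (ℝ × ℝ × ℝ × ℝ) r) = algebraMap ℝ (Matrix (Fin 4) (Fin 4) ℝ) r := by
  ext i j
  fin_cases i <;> fin_cases j <;>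
    simp [phiKfun, Matrix.algebraMap_matrix_apply, Matrix.one_apply, Matrix.vecHead,
      Matrix.vecTail] <;> ring

noncomputable def phiK : (ℝ × ℝ × ℝ × ℝ) →ₐ[ℝ] Matrix (Fin 4) (Fin 4) ℝ where
  toFun := phiKfun
  map_one' := phiKfun_one
  map_mul' := phiKfun_mul
  map_zero' := phiKfun_zero
  map_add' := phiKfun_add
  commutes' := phiKfun_algebraMap

/-! ### Exponential helper lemmas -/

lemma exp_semiconj {n : ℕ} (A B X : Matrix (Fin n) (Fin n) ℝ) (h : A * X = X * B) :
    exp A * X = X * exp B := by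
  have hp : ∀ k : ℕ, A ^ k * X = X * B ^ k := by
    intro k
    induction k with
    | zero => simp
    | succ k ih =>
        rw [pow_succ, pow_succ, Matrix.mul_assoc, h, ← Matrix.mul_assoc, ih, Matrix.mul_assoc]
  simp only [exp_eq_tsum ℝ]
  erw [← (NormedSpace.expSeries_summable' (𝕂 := ℝ) A).tsum_mul_right X,
      ← (NormedSpace.expSeries_summable' (𝕂 := ℝ) B).tsum_mul_left X]
  exact tsum_congr fun k => by rw [smul_mul_assoc, hp k, mul_smul_comm]

lemma exp_smul_one {n : ℕ} (t : ℝ) :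
    exp (t • (1 : Matrix (Fin n) (Fin n) ℝ)) = Real.exp t • (1 : Matrix (Fin n) (Fin n) ℝ) := by
  have h1 : t • (1 : Matrix (Fin n) (Fin n) ℝ) = algebraMap ℝ _ t :=
    (Algebra.algebraMap_eq_smul_one t).symm
  rw [h1]; erw [← algebraMap_exp_comm]; rw [← Real.exp_eq_exp_ℝ, Algebra.algebraMap_eq_smul_one]

lemma exp_triple (x y : ℝ) (z : ℂ) :
    exp ((x, y, z) : ℝ × ℝ × ℂ) = (Real.exp x, Real.exp y, Complex.exp z) := by
  have h2 := Prod.snd_exp ((x, (y, z)) : ℝ × ℝ × ℂ)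
  refine Prod.ext ?_ (h2.trans ?_)
  · rw [Prod.fst_exp, ← Real.exp_eq_exp_ℝ]
  · refine Prod.ext ?_ ?_
    · rw [Prod.fst_exp, ← Real.exp_eq_exp_ℝ]
    · rw [Prod.snd_exp, Complex.exp_eq_exp_ℂ]

lemma exp_quad (x y z t : ℝ) :
    exp ((x, y, z, t) : ℝ × ℝ × ℝ × ℝ) = (Real.exp x, Real.exp y, Real.exp z, Real.exp t) := by
  have h2 := Prod.snd_exp ((x, (y, z, t)) : ℝ × ℝ × ℝ × ℝ)
  have h3 := Prod.snd_exp ((y, (z, t)) : ℝ × ℝ × ℝ)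
  refine Prod.ext ?_ (h2.trans ?_)
  · rw [Prod.fst_exp, ← Real.exp_eq_exp_ℝ]
  · refine Prod.ext ?_ (h3.trans ?_)
    · rw [Prod.fst_exp, ← Real.exp_eq_exp_ℝ]
    · refine Prod.ext ?_ ?_
      · rw [Prod.fst_exp, ← Real.exp_eq_exp_ℝ]
      · rw [Prod.snd_exp, ← Real.exp_eq_exp_ℝ]

lemma cexp_val : Complex.exp ⟨-Real.pi, Real.pi⟩ = ((-Real.exp (-Real.pi) : ℝ) : ℂ) := by
  have h : (⟨-Real.pi, Real.pi⟩ : ℂ) = ((-Real.pi : ℝ) : ℂ) + (Real.pi : ℝ) * Complex.I := by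
    apply Complex.ext <;> simp
  rw [h, Complex.exp_add, Complex.exp_pi_mul_I, ← Complex.ofReal_exp]
  push_cast
  ring

/-! ### The matrices -/

noncomputable def Mw : Matrix (Fin 4) (Fin 4) ℝ :=
  phiMfun (1, Real.exp (-(2*Real.pi)), ((-Real.exp (-Real.pi) : ℝ) : ℂ))

noncomputable def Nw : Matrix (Fin 4) (Fin 4) ℝ :=
  phiKfun (1, Real.exp (-4), Real.exp (-2), Real.exp (-6))

noncomputable def Q1w : Matrix (Fin 4) (Fin 4) ℝ :=
  phiMfun (0, -(2*Real.pi), (⟨-Real.pi, Real.pi⟩ : ℂ))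

noncomputable def Q2w : Matrix (Fin 4) (Fin 4) ℝ :=
  phiKfun (0, -4, -2, -6)

lemma exp_Q1 : exp Q1w = Mw := by
  have hcont : Continuous phiM := phiM.toLinearMap.continuous_of_finiteDimensional
  have h := map_exp phiM hcont ((0, -(2*Real.pi), (⟨-Real.pi, Real.pi⟩ : ℂ)) : ℝ × ℝ × ℂ)
  have harg : phiM (exp ((0, -(2*Real.pi), (⟨-Real.pi, Real.pi⟩ : ℂ)) : ℝ × ℝ × ℂ)) = Mw := by
    rw [exp_triple, Real.exp_zero, cexp_val]
    rfl
  rw [← harg, h]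
  rfl

lemma exp_Q2 : exp Q2w = Nw := by
  have hcont : Continuous phiK := phiK.toLinearMap.continuous_of_finiteDimensional
  have h := map_exp phiK hcont ((0, -4, -2, -6) : ℝ × ℝ × ℝ × ℝ)
  have harg : phiK (exp ((0, -4, -2, -6) : ℝ × ℝ × ℝ × ℝ)) = Nw := by
    rw [exp_quad, Real.exp_zero]
    rfl
  rw [← harg, h]
  rfl

/-! ### Eigen computations -/

lemma Nw_h2 : Nw.mulVec ![1,-1,1,-1] = Real.exp (-2) • ![1,-1,1,-1] := by
  funext i
  fin_cases i <;>
    simp [Nw, phiKfun, Matrix.mulVec, dotProduct, Fin.sum_univ_four, Matrix.vecHead,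
      Matrix.vecTail] <;> ring

lemma Mw_h2 : Mw.mulVec ![1,-1,1,-1] = (-Real.exp (-Real.pi)) • ![1,-1,1,-1] := by
  funext i
  fin_cases i <;>
    simp [Mw, phiMfun, Matrix.mulVec, dotProduct, Fin.sum_univ_four, -Complex.ofReal_exp,
      Matrix.vecHead, Matrix.vecTail] <;> ring

lemma Mw_v0 : Matrix.vecMul ![1,1,1,1] Mw = (1:ℝ) • ![1,1,1,1] := by
  funext i
  fin_cases i <;>
    simp [Mw, phiMfun, Matrix.vecMul, dotProduct, Fin.sum_univ_four, -Complex.ofReal_exp,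
      Matrix.vecHead, Matrix.vecTail] <;> ring

lemma Mw_v1 : Matrix.vecMul ![1,1,-1,-1] Mw = Real.exp (-(2*Real.pi)) • ![1,1,-1,-1] := by
  funext i
  fin_cases i <;>
    simp [Mw, phiMfun, Matrix.vecMul, dotProduct, Fin.sum_univ_four, -Complex.ofReal_exp,
      Matrix.vecHead, Matrix.vecTail] <;> ring

lemma Mw_v3 : Matrix.vecMul ![1,-1,-1,1] Mw = (-Real.exp (-Real.pi)) • ![1,-1,-1,1] := by
  funext i
  fin_cases i <;>
    simp [Mw, phiMfun, Matrix.vecMul, dotProduct, Fin.sum_univ_four, -Complex.ofReal_exp,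
      Matrix.vecHead, Matrix.vecTail] <;> ring

lemma Nw_v0 : Matrix.vecMul ![1,1,1,1] Nw = (1:ℝ) • ![1,1,1,1] := by
  funext i
  fin_cases i <;>
    simp [Nw, phiKfun, Matrix.vecMul, dotProduct, Fin.sum_univ_four, Matrix.vecHead,
      Matrix.vecTail] <;> ring

lemma Nw_v1 : Matrix.vecMul ![1,1,-1,-1] Nw = Real.exp (-4) • ![1,1,-1,-1] := by
  funext i
  fin_cases i <;>
    simp [Nw, phiKfun, Matrix.vecMul, dotProduct, Fin.sum_univ_four, Matrix.vecHead,
      Matrix.vecTail] <;> ring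

lemma Nw_v3 : Matrix.vecMul ![1,-1,-1,1] Nw = Real.exp (-6) • ![1,-1,-1,1] := by
  funext i
  fin_cases i <;>
    simp [Nw, phiKfun, Matrix.vecMul, dotProduct, Fin.sum_univ_four, Matrix.vecHead,
      Matrix.vecTail] <;> ring

/-- The Kimura 3ST matrix `K(a,b,c,d)`. -/
def K {α : Type*} (a b c d : α) : Matrix (Fin 4) (Fin 4) α :=
  !![a, b, c, d;
     b, a, d, c;
     c, d, a, b;
     d, c, b, a]

/-- A Markov matrix: nonnegative entries, rows sum to 1. -/
def IsMarkov {k : ℕ} (M : Matrix (Fin k) (Fin k) ℝ) : Prop :=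
  (∀ i j, 0 ≤ M i j) ∧ ∀ i, ∑ j, M i j = 1

/-- A rate matrix: nonnegative off-diagonal entries, rows sum to 0. -/
def IsRate {k : ℕ} (Q : Matrix (Fin k) (Fin k) ℝ) : Prop :=
  (∀ i j, i ≠ j → 0 ≤ Q i j) ∧ ∀ i, ∑ j, Q i j = 0

/-! ### K-forms -/

lemma Mw_K : Mw = K ((1 + Real.exp (-(2*Real.pi)))/4 - Real.exp (-Real.pi)/2)
    ((1 + Real.exp (-(2*Real.pi)))/4 + Real.exp (-Real.pi)/2)
    ((1 - Real.exp (-(2*Real.pi)))/4) ((1 - Real.exp (-(2*Real.pi)))/4) := by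
  ext i j
  fin_cases i <;> fin_cases j <;>
    simp [Mw, phiMfun, K, -Complex.ofReal_exp, Matrix.vecHead, Matrix.vecTail] <;> ring

lemma Nw_K : Nw = K ((1 + Real.exp (-4) + Real.exp (-2) + Real.exp (-6))/4)
    ((1 + Real.exp (-4) - Real.exp (-2) - Real.exp (-6))/4)
    ((1 - Real.exp (-4) + Real.exp (-2) - Real.exp (-6))/4)
    ((1 - Real.exp (-4) - Real.exp (-2) + Real.exp (-6))/4) := by
  ext i j
  fin_cases i <;> fin_cases j <;>
    simp [Nw, phiKfun, K, Matrix.vecHead, Matrix.vecTail]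


/-! ### Markov and rate properties -/

lemma exp2pi_sq : Real.exp (-(2*Real.pi)) = Real.exp (-Real.pi) * Real.exp (-Real.pi) := by
  rw [← Real.exp_add]; ring_nf

lemma Mw_markov : IsMarkov Mw := by
  have hw : (0:ℝ) < Real.exp (-Real.pi) := Real.exp_pos _
  have hw1 : Real.exp (-Real.pi) < 1 := Real.exp_lt_one_iff.mpr (by linarith [Real.pi_pos])
  have hv := exp2pi_sq
  constructor
  · intro i j
    fin_cases i <;> fin_cases j <;>
      simp [Mw, phiMfun, -Complex.ofReal_exp, Matrix.vecHead, Matrix.vecTail] <;>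
      nlinarith [sq_nonneg (1 - Real.exp (-Real.pi))]
  · intro i
    fin_cases i <;>
      simp [Mw, phiMfun, Fin.sum_univ_four, -Complex.ofReal_exp, Matrix.vecHead,
        Matrix.vecTail] <;> ring

lemma Nw_markov : IsMarkov Nw := by
  have h1 : (2.7:ℝ) < Real.exp 1 := by linarith [Real.exp_one_gt_d9]
  have h2 : Real.exp (-2) * (Real.exp 1 * Real.exp 1) = 1 := by
    rw [← Real.exp_add, ← Real.exp_add]; norm_num
  have h3 : Real.exp (-2) < 1/3 := by nlinarith [Real.exp_pos (-2:ℝ)]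
  have h4 : Real.exp (-4:ℝ) < Real.exp (-2) := Real.exp_lt_exp.mpr (by norm_num)
  have h6 : Real.exp (-6:ℝ) < Real.exp (-2) := Real.exp_lt_exp.mpr (by norm_num)
  have hp2 : (0:ℝ) < Real.exp (-2) := Real.exp_pos _
  have hp4 : (0:ℝ) < Real.exp (-4) := Real.exp_pos _
  have hp6 : (0:ℝ) < Real.exp (-6) := Real.exp_pos _
  constructor
  · intro i j
    fin_cases i <;> fin_cases j <;>
      simp [Nw, phiKfun, Matrix.vecHead, Matrix.vecTail] <;> linarith
  · intro i
    fin_cases i <;>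
      simp [Nw, phiKfun, Fin.sum_univ_four, Matrix.vecHead, Matrix.vecTail] <;> ring

lemma Q1w_rate : IsRate Q1w := by
  have hpi := Real.pi_pos
  constructor
  · intro i j hij
    fin_cases i <;> fin_cases j <;>
      first
        | exact absurd rfl hij
        | (simp [Q1w, phiMfun, Matrix.vecHead, Matrix.vecTail]; linarith)
  · intro i
    fin_cases i <;>
      simp [Q1w, phiMfun, Fin.sum_univ_four, Matrix.vecHead, Matrix.vecTail] <;> ring

lemma Q2w_rate : IsRate Q2w := by
  constructor
  · intro i j hij
    fin_cases i <;> fin_cases j <;>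
      first
        | exact absurd rfl hij
        | (simp [Q2w, phiKfun, Matrix.vecHead, Matrix.vecTail]; norm_num)
  · intro i
    fin_cases i <;>
      simp [Q2w, phiKfun, Fin.sum_univ_four, Matrix.vecHead, Matrix.vecTail] <;> ring

/-! ### Non-embeddability of the product -/

lemma not_embeddable :
    ¬∃ Q : Matrix (Fin 4) (Fin 4) ℝ, IsRate Q ∧ NormedSpace.exp Q = Mw * Nw := by
  rintro ⟨Q, -, hQexp⟩
  set R : Matrix (Fin 4) (Fin 4) ℝ := Mw * Nw with hRdef
  have hc : (0:ℝ) < Real.exp (-Real.pi) * Real.exp (-2) :=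
    mul_pos (Real.exp_pos _) (Real.exp_pos _)
  -- eigenvector relations of R := Mw * Nw
  have hR2 : R *ᵥ ![1,-1,1,-1] =
      (-(Real.exp (-Real.pi) * Real.exp (-2))) • ![1,-1,1,-1] := by
    rw [hRdef, ← Matrix.mulVec_mulVec, Nw_h2, Matrix.mulVec_smul, Mw_h2, smul_smul]
    congr 1
    ring
  have hRv0 : ![1,1,1,1] ᵥ* R = (1:ℝ) • ![1,1,1,1] := by
    rw [hRdef, ← Matrix.vecMul_vecMul, Mw_v0, Matrix.smul_vecMul, Nw_v0, smul_smul]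
    norm_num
  have hRv1 : ![1,1,-1,-1] ᵥ* R =
      (Real.exp (-(2*Real.pi)) * Real.exp (-4)) • ![1,1,-1,-1] := by
    rw [hRdef, ← Matrix.vecMul_vecMul, Mw_v1, Matrix.smul_vecMul, Nw_v1, smul_smul]
  have hRv3 : ![1,-1,-1,1] ᵥ* R =
      (-(Real.exp (-Real.pi) * Real.exp (-6))) • ![1,-1,-1,1] := by
    rw [hRdef, ← Matrix.vecMul_vecMul, Mw_v3, Matrix.smul_vecMul, Nw_v3, smul_smul]
    congr 1
    ring
  -- Q commutes with its exponential
  have hQR : Q * R = R * Q := by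
    have h := (Commute.refl Q).exp_right
    rw [hQexp] at h
    exact h
  set u : Fin 4 → ℝ := Q *ᵥ ![1,-1,1,-1] with hu_def
  have hu : R *ᵥ u = (-(Real.exp (-Real.pi) * Real.exp (-2))) • u := by
    rw [hu_def, Matrix.mulVec_mulVec, ← hQR, ← Matrix.mulVec_mulVec, hR2,
      Matrix.mulVec_smul]
  -- dot products with the other eigenvectors vanish
  have key : ∀ (s : Fin 4 → ℝ) (v : ℝ), s ᵥ* R = v • s →
      v ≠ -(Real.exp (-Real.pi) * Real.exp (-2)) → s ⬝ᵥ u = 0 := by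
    intro s v hs hv
    have h1 : s ⬝ᵥ (R *ᵥ u) = v * (s ⬝ᵥ u) := by
      rw [Matrix.dotProduct_mulVec, hs, smul_dotProduct, smul_eq_mul]
    have h2 : s ⬝ᵥ (R *ᵥ u) = (-(Real.exp (-Real.pi) * Real.exp (-2))) * (s ⬝ᵥ u) := by
      rw [hu, dotProduct_smul, smul_eq_mul]
    have h3 : (v - (-(Real.exp (-Real.pi) * Real.exp (-2)))) * (s ⬝ᵥ u) = 0 := by
      rw [sub_mul]
      rw [h1] at h2
      linarith
    rcases mul_eq_zero.mp h3 with h | h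
    · exact absurd (by linarith) hv
    · exact h
  have hd0 : ![1,1,1,1] ⬝ᵥ u = 0 := key _ _ hRv0 (by nlinarith)
  have hd1 : ![1,1,-1,-1] ⬝ᵥ u = 0 := key _ _ hRv1 (by
    nlinarith [mul_pos (Real.exp_pos (-(2*Real.pi))) (Real.exp_pos (-4:ℝ))])
  have hd3 : ![1,-1,-1,1] ⬝ᵥ u = 0 := key _ _ hRv3 (by
    have h62 : Real.exp (-6:ℝ) < Real.exp (-2) := Real.exp_lt_exp.mpr (by norm_num)
    have := Real.exp_pos (-Real.pi)
    nlinarith)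
  simp only [dotProduct, Fin.sum_univ_four, Matrix.cons_val_zero, Matrix.cons_val_one,
    Matrix.head_cons, Matrix.cons_val_two, Matrix.tail_cons, Matrix.cons_val_three,
    Matrix.head_fin_const, one_mul, neg_one_mul, neg_mul] at hd0 hd1 hd3
  -- hence Q *ᵥ ![1,-1,1,-1] is a multiple of ![1,-1,1,-1]
  have hQh2 : Q *ᵥ ![1,-1,1,-1] = (u 0) • ![1,-1,1,-1] := by
    rw [← hu_def]
    funext i
    fin_cases i <;>
      simp [Matrix.vecHead, Matrix.vecTail] <;> linarith
  -- transfer through the exponential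
  set X : Matrix (Fin 4) (Fin 4) ℝ := Matrix.of (fun i _ => (![1,-1,1,-1] : Fin 4 → ℝ) i) with hX
  have hQX : Q * X = X * ((u 0) • 1) := by
    have hXr : X * ((u 0) • 1) = (u 0) • X := by
      rw [mul_smul_comm, mul_one]
    rw [hXr]
    ext i j
    have h := congrFun hQh2 i
    simp only [Matrix.mulVec, dotProduct, Fin.sum_univ_four, Pi.smul_apply,
      smul_eq_mul] at h
    simp only [Matrix.mul_apply, Fin.sum_univ_four, hX, Matrix.of_apply, Matrix.smul_apply,
      smul_eq_mul]
    exact h.trans (by ring)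
  have hsemi := exp_semiconj Q ((u 0) • 1) X hQX
  rw [hQexp, exp_smul_one] at hsemi
  -- evaluate the (0,0) entry
  have hL : (R * X) 0 0 = -(Real.exp (-Real.pi) * Real.exp (-2)) := by
    have h := congrFun hR2 0
    simp only [Matrix.mulVec, dotProduct, Fin.sum_univ_four, Pi.smul_apply,
      smul_eq_mul] at h
    simp only [Matrix.mul_apply, Fin.sum_univ_four, hX, Matrix.of_apply]
    rw [h]
    norm_num
  have hRt : (X * (Real.exp (u 0) • 1)) 0 0 = Real.exp (u 0) := by
    rw [mul_smul_comm, mul_one]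
    simp [hX]
  rw [hsemi, hRt] at hL
  have := Real.exp_pos (u 0)
  linarith

/-- There exist embeddable K3 Markov matrices `M`, `N` whose product `M·N` is not
embeddable: the set of embeddable K3 matrices is not multiplicatively closed. -/
theorem stmt_15 :
    ∃ M N : Matrix (Fin 4) (Fin 4) ℝ,
      IsMarkov M ∧ IsMarkov N ∧
      (∃ a b c d : ℝ, M = K a b c d) ∧ (∃ a b c d : ℝ, N = K a b c d) ∧
      (∃ Q₁ : Matrix (Fin 4) (Fin 4) ℝ, IsRate Q₁ ∧ NormedSpace.exp Q₁ = M) ∧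
      (∃ Q₂ : Matrix (Fin 4) (Fin 4) ℝ, IsRate Q₂ ∧ NormedSpace.exp Q₂ = N) ∧
      ¬∃ Q : Matrix (Fin 4) (Fin 4) ℝ, IsRate Q ∧ NormedSpace.exp Q = M * N := by
  exact ⟨Mw, Nw, Mw_markov, Nw_markov, ⟨_, _, _, _, Mw_K⟩, ⟨_, _, _, _, Nw_K⟩,
    ⟨Q1w, Q1w_rate, exp_Q1⟩, ⟨Q2w, Q2w_rate, exp_Q2⟩, not_embeddable⟩
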